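/- Let E ∈ ℝ^{2n×k} with E^T E = I_k and E^T J_{2n} E = 0, V = [E J_{2n}^T E], and P⊥ = I_{2n} − V V^T. Then J_{2n} P⊥ J_{2n}^T = P⊥, and consequently for any X ∈ ℝ^{2n×m}, ‖P⊥ X‖_F = ‖P⊥ J_{2n}^T X‖_F. -/

import Mathlib

open Matrix

attribute [local instance] Matrix.frobeniusNormedAddCommGroup

/-- The Poisson matrix `J_{2n} = [[0, I_n], [-I_n, 0]]`. -/
def PoissonMatrix (n : ℕ) : Matrix (Fin n ⊕ Fin n) (Fin n ⊕ Fin n) ℝ :=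
  Matrix.fromBlocks 0 1 (-1) 0

lemma poisson_transpose (n : ℕ) : (PoissonMatrix n)ᵀ = -PoissonMatrix n := by
  ext i j
  rcases i with i | i <;> rcases j with j | j <;>
    simp [PoissonMatrix, Matrix.fromBlocks, Matrix.one_apply, eq_comm]

lemma poisson_mul_self (n : ℕ) : PoissonMatrix n * PoissonMatrix n = -1 := by
  rw [PoissonMatrix, Matrix.fromBlocks_multiply]
  ext i j
  rcases i with i | i <;> rcases j with j | j <;>
    simp [Matrix.fromBlocks, Matrix.one_apply]

lemma proj_key (n : ℕ) (A : Matrix (Fin n ⊕ Fin n) (Fin n ⊕ Fin n) ℝ) :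
    PoissonMatrix n * ((1 : Matrix (Fin n ⊕ Fin n) (Fin n ⊕ Fin n) ℝ) -
        (A + (PoissonMatrix n)ᵀ * A * PoissonMatrix n)) * (PoissonMatrix n)ᵀ
      = 1 - (A + (PoissonMatrix n)ᵀ * A * PoissonMatrix n) := by
  have h1 := poisson_mul_self n
  rw [poisson_transpose]
  set J := PoissonMatrix n
  have hJB : ∀ B : Matrix (Fin n ⊕ Fin n) (Fin n ⊕ Fin n) ℝ, J * (J * B) = -B := by
    intro B; rw [← Matrix.mul_assoc, h1, Matrix.neg_mul, Matrix.one_mul]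
  have hBJ : ∀ B : Matrix (Fin n ⊕ Fin n) (Fin n ⊕ Fin n) ℝ, B * J * J = -B := by
    intro B; rw [Matrix.mul_assoc, h1, Matrix.mul_neg, Matrix.mul_one]
  simp only [Matrix.mul_sub, Matrix.sub_mul, Matrix.mul_add, Matrix.add_mul,
    Matrix.mul_neg, Matrix.neg_mul, Matrix.mul_one, Matrix.one_mul, neg_neg, h1,
    hJB, hBJ, Matrix.mul_assoc]
  abel

lemma poisson_mul_transpose (n : ℕ) : PoissonMatrix n * (PoissonMatrix n)ᵀ = 1 := by
  rw [poisson_transpose, Matrix.mul_neg, poisson_mul_self, neg_neg]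

lemma poisson_transpose_mul (n : ℕ) : (PoissonMatrix n)ᵀ * PoissonMatrix n = 1 := by
  rw [poisson_transpose, Matrix.neg_mul, poisson_mul_self, neg_neg]

lemma poisson_mul_norm (n m : ℕ) (Y : Matrix (Fin n ⊕ Fin n) (Fin m) ℝ) :
    ‖(PoissonMatrix n)ᵀ * Y‖ = ‖Y‖ := by
  have h1 : ∀ (i : Fin n) j, ((PoissonMatrix n)ᵀ * Y) (Sum.inl i) j = -Y (Sum.inr i) j := by
    intro i j
    simp [Matrix.mul_apply, PoissonMatrix, Fintype.sum_sum_type, Matrix.one_apply,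
      Finset.sum_ite_eq, Finset.sum_ite_eq']
  have h2 : ∀ (i : Fin n) j, ((PoissonMatrix n)ᵀ * Y) (Sum.inr i) j = Y (Sum.inl i) j := by
    intro i j
    simp [Matrix.mul_apply, PoissonMatrix, Fintype.sum_sum_type, Matrix.one_apply,
      Finset.sum_ite_eq, Finset.sum_ite_eq']
  rw [Matrix.frobenius_norm_def, Matrix.frobenius_norm_def]
  rw [Fintype.sum_sum_type, Fintype.sum_sum_type]
  simp only [h1, h2, norm_neg]
  rw [add_comm]

/-- For `V = [E  J_{2n}ᵀ E]` and the orthogonal projector `P⊥ = I − V Vᵀ`, one has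
`J_{2n} P⊥ J_{2n}ᵀ = P⊥` and hence `‖P⊥ X‖_F = ‖P⊥ J_{2n}ᵀ X‖_F` (Frobenius norm). -/
theorem projector_rotation_invariance (n k : ℕ)
    (E : Matrix (Fin n ⊕ Fin n) (Fin k) ℝ)
    (horth : Eᵀ * E = 1)
    (hiso : Eᵀ * PoissonMatrix n * E = 0) :
    let V := Matrix.fromCols E ((PoissonMatrix n)ᵀ * E)
    let P := (1 : Matrix (Fin n ⊕ Fin n) (Fin n ⊕ Fin n) ℝ) - V * Vᵀ
    PoissonMatrix n * P * (PoissonMatrix n)ᵀ = P ∧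
      ∀ (m : ℕ) (X : Matrix (Fin n ⊕ Fin n) (Fin m) ℝ),
        ‖P * X‖ = ‖P * ((PoissonMatrix n)ᵀ * X)‖ := by
  intro V P
  set J := PoissonMatrix n with hJdef
  have hVV : V * Vᵀ = E * Eᵀ + Jᵀ * (E * Eᵀ) * J := by
    show Matrix.fromCols E (Jᵀ * E) * (Matrix.fromCols E (Jᵀ * E))ᵀ = _
    rw [Matrix.transpose_fromCols, Matrix.fromCols_mul_fromRows]
    simp [Matrix.transpose_mul, Matrix.mul_assoc]
  have key : J * P * Jᵀ = P := by
    show J * ((1 : Matrix _ _ ℝ) - V * Vᵀ) * Jᵀ = (1 : Matrix _ _ ℝ) - V * Vᵀ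
    rw [hVV]
    exact proj_key n (E * Eᵀ)
  refine ⟨key, ?_⟩
  intro m X
  have hcomm : P * Jᵀ = Jᵀ * P := by
    calc P * Jᵀ = (Jᵀ * J) * P * Jᵀ := by rw [poisson_transpose_mul]; rw [Matrix.one_mul]
    _ = Jᵀ * (J * P * Jᵀ) := by noncomm_ring
    _ = Jᵀ * P := by rw [key]
  have : P * (Jᵀ * X) = Jᵀ * (P * X) := by
    rw [← Matrix.mul_assoc, hcomm, Matrix.mul_assoc]
  rw [this, poisson_mul_norm]
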